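/- Let $\mathcal{X}$ and $\mathcal{Y}$ be finite alphabets with $|\mathcal{Y}| \geq 2$, and let $p_{XY}, q_{XY}$ be joint probability distributions on $\mathcal{X} \times \mathcal{Y}$. If $\varepsilon \in (0, 1 - 1/|\mathcal{Y}|]$ and $\tfrac{1}{2}\sum_{x,y} |p_{XY}(x,y) - q_{XY}(x,y)| \leq \varepsilon$, then $|H(Y|X)_p - H(Y|X)_q| \leq \varepsilon \log_2(|\mathcal{Y}| - 1) + h_2(\varepsilon)$. -/

import Mathlib

open scoped BigOperators

/-- Conditional Shannon entropy H(Y|X) of a joint distribution `p` on `𝓧 × 𝓨`,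
with the sum restricted to those `x` whose marginal `pₓ(x)` is positive and with
the convention `0 · log₂ 0 = 0` (automatic since `Real.logb 2 0 = 0`). -/
noncomputable def condShannonEntropy {𝓧 𝓨 : Type*} [Fintype 𝓧] [Fintype 𝓨]
    (p : 𝓧 → 𝓨 → ℝ) : ℝ :=
  -∑ x, if 0 < ∑ y, p x y then
      (∑ y, p x y) *
        ∑ y, (p x y / ∑ y', p x y') * Real.logb 2 (p x y / ∑ y', p x y')
    else 0

noncomputable def binEntropy (ε : ℝ) : ℝ :=
  -ε * Real.logb 2 ε - (1 - ε) * Real.logb 2 (1 - ε)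

namespace ASproof

open Real Finset

/-- Unnormalized fiber entropy: `∑ η(α y) - η(∑ α)` with `η = negMulLog`. -/
noncomputable def ent {𝓨 : Type*} [Fintype 𝓨] (α : 𝓨 → ℝ) : ℝ :=
  (∑ y, Real.negMulLog (α y)) - Real.negMulLog (∑ y, α y)

lemma negMulLog_add_le {x y : ℝ} (hx : 0 ≤ x) (hy : 0 ≤ y) :
    Real.negMulLog (x + y) ≤ Real.negMulLog x + Real.negMulLog y := by
  rcases hx.eq_or_lt with h | hx
  · simp [← h]
  rcases hy.eq_or_lt with h | hy
  · simp [← h]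
  have hxy : (0:ℝ) < x + y := by linarith
  have h1 : Real.log x ≤ Real.log (x + y) := Real.log_le_log hx (by linarith)
  have h2 : Real.log y ≤ Real.log (x + y) := Real.log_le_log hy (by linarith)
  simp only [Real.negMulLog, neg_mul]
  nlinarith [mul_le_mul_of_nonneg_left h1 hx.le, mul_le_mul_of_nonneg_left h2 hy.le]

lemma negMulLog_sum_le {ι : Type*} (s : Finset ι) (f : ι → ℝ) (hf : ∀ i ∈ s, 0 ≤ f i) :
    Real.negMulLog (∑ i ∈ s, f i) ≤ ∑ i ∈ s, Real.negMulLog (f i) := by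
  classical
  induction s using Finset.cons_induction with
  | empty => simp
  | cons a s ha ih =>
    rw [Finset.sum_cons, Finset.sum_cons]
    have h1 : 0 ≤ f a := hf a (Finset.mem_cons_self a s)
    have h2 : ∀ i ∈ s, 0 ≤ f i := fun i hi => hf i (Finset.mem_cons_of_mem hi)
    calc Real.negMulLog (f a + ∑ i ∈ s, f i)
        ≤ Real.negMulLog (f a) + Real.negMulLog (∑ i ∈ s, f i) :=
          negMulLog_add_le h1 (Finset.sum_nonneg h2)
      _ ≤ Real.negMulLog (f a) + ∑ i ∈ s, Real.negMulLog (f i) := by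
          linarith [ih h2]

variable {𝓨 : Type*} [Fintype 𝓨]

lemma ent_nonneg {α : 𝓨 → ℝ} (hα : ∀ y, 0 ≤ α y) : 0 ≤ ent α := by
  have := negMulLog_sum_le Finset.univ α (fun i _ => hα i)
  unfold ent; linarith

lemma ent_eq_sum {α : 𝓨 → ℝ} (hα : ∀ y, 0 ≤ α y) :
    ent α = ∑ y, α y * Real.log ((∑ y', α y') / α y) := by
  unfold ent
  have hA : ∀ y, α y * Real.log ((∑ y', α y') / α y)
      = Real.negMulLog (α y) + α y * Real.log (∑ y', α y') := by
    intro y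
    rcases (hα y).eq_or_lt with h | h
    · simp [← h, Real.negMulLog]
    · rcases (Finset.sum_nonneg (fun i _ => hα i) : (0:ℝ) ≤ ∑ y', α y').eq_or_lt with hA | hA
      · -- sum zero but α y > 0 impossible
        exfalso
        have : α y ≤ ∑ y', α y' :=
          Finset.single_le_sum (fun i _ => hα i) (Finset.mem_univ y)
        linarith
      · rw [Real.log_div (ne_of_gt hA) (ne_of_gt h), Real.negMulLog]
        ring
  rw [Finset.sum_congr rfl (fun y _ => hA y), Finset.sum_add_distrib, ← Finset.sum_mul]
  have : Real.negMulLog (∑ y, α y) = -((∑ y, α y) * Real.log (∑ y, α y)) := by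
    rw [Real.negMulLog]; ring
  rw [this]; ring

/-- Gibbs' inequality, unnormalized form. -/
lemma ent_le_gibbs {α r : 𝓨 → ℝ} (hα : ∀ y, 0 ≤ α y) (hr : ∀ y, 0 < r y)
    (hr1 : ∑ y, r y = 1) :
    ent α ≤ ∑ y, α y * Real.log (1 / r y) := by
  classical
  set A := ∑ y, α y with hAdef
  have hA0 : 0 ≤ A := Finset.sum_nonneg (fun i _ => hα i)
  rcases hA0.eq_or_lt with hA | hA
  · -- A = 0 : all α y = 0
    have hz : ∀ y ∈ Finset.univ, α y = 0 := by
      intro y _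
      have h1 : α y ≤ A := Finset.single_le_sum (fun i _ => hα i) (Finset.mem_univ y)
      linarith [hα y]
    have h1 : ent α = 0 := by
      unfold ent
      rw [← hAdef, ← hA]
      rw [Finset.sum_congr rfl (fun y hy => by rw [hz y hy])]
      simp
    rw [h1]
    apply Finset.sum_nonneg
    intro y _
    rw [hz y (Finset.mem_univ y)]
    simp
  · rw [ent_eq_sum hα]
    have key : ∀ y ∈ Finset.univ,
        α y * Real.log (A / α y) - α y * Real.log (1 / r y) ≤ A * r y - α y := by
      intro y _
      rcases (hα y).eq_or_lt with h | h
      · rw [← h]; simp [mul_nonneg hA0 (hr y).le]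
      · have harg : 0 < A * r y / α y := div_pos (mul_pos hA (hr y)) h
        have hlog := Real.log_le_sub_one_of_pos harg
        have hexp : α y * Real.log (A * r y / α y) ≤ α y * (A * r y / α y - 1) :=
          mul_le_mul_of_nonneg_left hlog h.le
        have he : α y * (A * r y / α y - 1) = A * r y - α y := by
          field_simp
        have hlogsplit : Real.log (A * r y / α y) =
            Real.log (A / α y) - Real.log (1 / r y) := by
          rw [Real.log_div (ne_of_gt (mul_pos hA (hr y))) (ne_of_gt h),
              Real.log_mul (ne_of_gt hA) (ne_of_gt (hr y)),
              Real.log_div (ne_of_gt hA) (ne_of_gt h),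
              Real.log_div one_ne_zero (ne_of_gt (hr y)), Real.log_one]
          ring
        calc α y * Real.log (A / α y) - α y * Real.log (1 / r y)
            = α y * Real.log (A * r y / α y) := by rw [hlogsplit]; ring
          _ ≤ A * r y - α y := by rw [← he]; exact hexp
    have hsum := Finset.sum_le_sum key
    rw [Finset.sum_sub_distrib] at hsum
    have : ∑ y, (A * r y - α y) = 0 := by
      rw [Finset.sum_sub_distrib, ← Finset.mul_sum, hr1, ← hAdef]
      ring
    linarith [hsum.trans_eq this]

lemma ent_le_log_card {α : 𝓨 → ℝ} (hα : ∀ y, 0 ≤ α y) (hcard : 0 < Fintype.card 𝓨) :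
    ent α ≤ (∑ y, α y) * Real.log (Fintype.card 𝓨) := by
  have hKpos : (0:ℝ) < (Fintype.card 𝓨 : ℝ) := by exact_mod_cast hcard
  have := ent_le_gibbs (r := fun _ => 1 / (Fintype.card 𝓨 : ℝ)) hα
    (fun y => by positivity)
    (by rw [Finset.sum_const, Finset.card_univ, nsmul_eq_mul]; field_simp)
  calc ent α ≤ ∑ y, α y * Real.log (1 / (1 / (Fintype.card 𝓨 : ℝ))) := this
    _ = (∑ y, α y) * Real.log (Fintype.card 𝓨) := by
        rw [one_div_one_div, ← Finset.sum_mul]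


set_option maxHeartbeats 2000000 in
/-- The per-fiber linear certificate: the core of the Alhejji–Smith bound. -/
lemma fiber_bound (hcard : 2 ≤ Fintype.card 𝓨) {ε : ℝ} (hε0 : 0 < ε)
    (hε1 : ε ≤ 1 - 1 / (Fintype.card 𝓨 : ℝ))
    {α β : 𝓨 → ℝ} (hα : ∀ y, 0 ≤ α y) (hβ : ∀ y, 0 ≤ β y) :
    ent α - ent β ≤ Real.log (((Fintype.card 𝓨 : ℝ) - 1) / ε) * (∑ y, α y)
      - Real.log (((Fintype.card 𝓨 : ℝ) - 1) * (1 - ε) / ε) * (∑ y, min (α y) (β y)) := by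
  classical
  set K : ℝ := (Fintype.card 𝓨 : ℝ) with hKdef
  have hK2 : (2:ℝ) ≤ K := by rw [hKdef]; exact_mod_cast hcard
  have hK0 : 0 < K := by linarith
  have hK1 : (0:ℝ) < K - 1 := by linarith
  have h1K : 0 < 1 / K := by positivity
  have hε1' : ε < 1 := by
    have : 1 - 1 / K < 1 := by linarith
    linarith
  have h1ε : 0 < 1 - ε := by
    have : 1 / K ≤ 1 - ε := by linarith
    linarith
  -- key constant facts
  have hκ1 : 1 ≤ (K - 1) * (1 - ε) / ε := by
    rw [le_div_iff₀ hε0]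
    -- (K-1)(1-ε) ≥ ε  ⟸  ε ≤ 1 - 1/K
    have h' : ε * K ≤ K - 1 := by
      have := mul_le_mul_of_nonneg_right hε1 hK0.le
      calc ε * K ≤ (1 - 1 / K) * K := by nlinarith
        _ = K - 1 := by field_simp
    nlinarith
  have hc0 : 0 ≤ Real.log ((K - 1) * (1 - ε) / ε) := Real.log_nonneg hκ1
  have hRK : Real.log K ≤ Real.log ((K - 1) / ε) := by
    apply Real.log_le_log hK0
    rw [le_div_iff₀ hε0]
    have := mul_le_mul_of_nonneg_right hε1 hK0.le
    calc K * ε = ε * K := by ring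
      _ ≤ (1 - 1 / K) * K := by nlinarith
      _ = K - 1 := by field_simp
  set c : ℝ := Real.log ((K - 1) * (1 - ε) / ε) with hcdef
  set R : ℝ := Real.log ((K - 1) / ε) with hRdef
  set A : ℝ := ∑ y, α y with hAdef
  set B : ℝ := ∑ y, β y with hBdef
  clear_value c R A B
  have hA0 : 0 ≤ A := by rw [hAdef]; exact Finset.sum_nonneg (fun i _ => hα i)
  have hB0 : 0 ≤ B := by rw [hBdef]; exact Finset.sum_nonneg (fun i _ => hβ i)
  have hβB : ∀ y, β y ≤ B := by
    intro y; rw [hBdef]; exact Finset.single_le_sum (fun i _ => hβ i) (Finset.mem_univ y)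
  rcases hB0.eq_or_lt with hB | hB
  · -- B = 0 : all β = 0
    have hz : ∀ y, β y = 0 := by
      intro y
      linarith [hβ y, hβB y]
    have hminz : ∀ y, min (α y) (β y) = 0 := by
      intro y; rw [hz y]; exact min_eq_right (hα y)
    have hentβ : ent β = 0 := by
      unfold ent
      have h1 : (∑ y, Real.negMulLog (β y)) = 0 :=
        Finset.sum_eq_zero (fun y _ => by rw [hz y, Real.negMulLog_zero])
      have h2 : (∑ y, β y) = 0 := by rw [← hBdef, ← hB]
      rw [h1, h2, Real.negMulLog_zero, sub_zero]
    rw [hentβ, Finset.sum_congr rfl (fun y _ => hminz y)]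
    simp only [Finset.sum_const_zero, mul_zero, sub_zero]
    calc ent α ≤ A * Real.log K := by
          have := ent_le_log_card hα (by omega)
          rw [← hAdef] at this
          exact this
      _ ≤ R * A := by
          rw [mul_comm]
          exact mul_le_mul_of_nonneg_right hRK hA0
  · -- B > 0
    set r : 𝓨 → ℝ := fun y => (1 - ε) * (β y / B) + ε * (1 - β y / B) / (K - 1) with hrdef
    have hbmem : ∀ y, 0 ≤ β y / B ∧ β y / B ≤ 1 := by
      intro y
      constructor
      · exact div_nonneg (hβ y) hB.le
      · rw [div_le_one hB]
        exact hβB y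
    have hrpos : ∀ y, 0 < r y := by
      intro y
      rcases (hβ y).eq_or_lt with h | h
      · have hb0 : β y / B = 0 := by rw [← h, zero_div]
        have hre : r y = ε / (K - 1) := by simp only [hrdef, hb0]; ring
        rw [hre]
        exact div_pos hε0 hK1
      · have h1 : 0 < (1 - ε) * (β y / B) := mul_pos h1ε (div_pos h hB)
        have h2 : 0 ≤ ε * (1 - β y / B) / (K - 1) :=
          div_nonneg (mul_nonneg hε0.le (by linarith [(hbmem y).2])) hK1.le
        simp only [hrdef]
        linarith
    have hr1 : ∑ y, r y = 1 := by
      simp only [hrdef]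
      rw [Finset.sum_add_distrib]
      have e1 : ∑ y, (1 - ε) * (β y / B) = 1 - ε := by
        rw [← Finset.mul_sum, ← Finset.sum_div, ← hBdef, div_self (ne_of_gt hB), mul_one]
      have e2 : ∑ y, ε * (1 - β y / B) / (K - 1) = ε := by
        rw [← Finset.sum_div, ← Finset.mul_sum]
        rw [Finset.sum_sub_distrib, Finset.sum_const, Finset.card_univ, nsmul_eq_mul,
          mul_one, ← Finset.sum_div, ← hBdef, div_self (ne_of_gt hB)]
        rw [← hKdef]
        field_simp
      rw [e1, e2]; ring
    have hgibbs : ent α ≤ ∑ y, α y * Real.log (1 / r y) :=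
      ent_le_gibbs hα hrpos hr1
    have hentβ : ent β = ∑ y, β y * Real.log (B / β y) := by
      have := ent_eq_sum hβ
      rw [← hBdef] at this
      exact this
    -- per-coordinate inequality
    have hpc : ∀ y ∈ Finset.univ,
        α y * Real.log (1 / r y) ≤
          (R * α y - c * min (α y) (β y)) + β y * Real.log (B / β y) := by
      intro y _
      rcases (hβ y).eq_or_lt with h | h
      · -- β y = 0
        have hb : β y / B = 0 := by rw [← h, zero_div]
        have hr : r y = ε / (K - 1) := by
          simp only [hrdef, hb]; ring
        have hlog : Real.log (1 / r y) = R := by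
          rw [hr, one_div_div, hRdef]
        have hm : min (α y) (β y) = 0 := by rw [← h]; exact min_eq_right (hα y)
        rw [hlog, hm, ← h]
        simp [mul_comm]
      · -- β y > 0
        set b : ℝ := β y / B with hbdef
        have hb0 : 0 < b := by rw [hbdef]; exact div_pos h hB
        clear_value b
        have hb1 : b ≤ 1 := by rw [hbdef]; exact (hbmem y).2
        set κ : ℝ := (K - 1) * (1 - ε) / ε with hκdef
        have hκ0 : 0 < κ := by rw [hκdef]; positivity
        clear_value κ
        have hXarg : 0 < 1 + (κ - 1) * b := by nlinarith
        have hX0 : 0 ≤ Real.log (1 + (κ - 1) * b) :=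
          Real.log_nonneg (by nlinarith)
        have hY0 : 0 ≤ Real.log (B / β y) := by
          apply Real.log_nonneg
          rw [le_div_iff₀ h]
          linarith [hβB y]
        have hYb : Real.log (B / β y) = Real.log (1 / b) := by
          rw [hbdef, one_div_div]
        -- r y = (ε/(K-1)) * (1 + (κ-1) b)
        have hrid : r y = ε / (K - 1) * (1 + (κ - 1) * b) := by
          simp only [hrdef, ← hbdef, hκdef]
          field_simp
          ring
        have hlogr : Real.log (1 / r y) = R - Real.log (1 + (κ - 1) * b) := by
          rw [hrid, one_div, Real.log_inv,
            Real.log_mul (by positivity) (ne_of_gt hXarg), hRdef,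
            Real.log_div (ne_of_gt hε0) (ne_of_gt hK1),
            Real.log_div (ne_of_gt hK1) (ne_of_gt hε0)]
          ring
        -- c ≤ X + Y
        have hcXY : c ≤ Real.log (1 + (κ - 1) * b) + Real.log (1 / b) := by
          rw [← Real.log_mul (ne_of_gt hXarg) (by positivity)]
          rw [hcdef]
          apply Real.log_le_log hκ0
          have hid : (1 + (κ - 1) * b) * (1 / b) = (1 + (κ - 1) * b) / b := by ring
          rw [hid, le_div_iff₀ hb0]
          nlinarith
        have hmin0 : 0 ≤ min (α y) (β y) := le_min (hα y) h.le
        have hminα : min (α y) (β y) ≤ α y := min_le_left _ _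
        have hminβ : min (α y) (β y) ≤ β y := min_le_right _ _
        have key : c * min (α y) (β y) ≤
            α y * Real.log (1 + (κ - 1) * b) + β y * Real.log (1 / b) := by
          calc c * min (α y) (β y)
              ≤ (Real.log (1 + (κ - 1) * b) + Real.log (1 / b)) * min (α y) (β y) :=
                mul_le_mul_of_nonneg_right hcXY hmin0
            _ = Real.log (1 + (κ - 1) * b) * min (α y) (β y)
                + Real.log (1 / b) * min (α y) (β y) := by ring
            _ ≤ Real.log (1 + (κ - 1) * b) * α y + Real.log (1 / b) * β y := by
                have t1 := mul_le_mul_of_nonneg_left hminα hX0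
                have t2 := mul_le_mul_of_nonneg_left hminβ (hYb ▸ hY0)
                linarith
            _ = α y * Real.log (1 + (κ - 1) * b) + β y * Real.log (1 / b) := by ring
        rw [hlogr, hYb]
        nlinarith [key]
    have hsum := Finset.sum_le_sum hpc
    rw [Finset.sum_add_distrib] at hsum
    have hsplit : ∑ y, (R * α y - c * min (α y) (β y))
        = R * A - c * ∑ y, min (α y) (β y) := by
      rw [Finset.sum_sub_distrib, ← Finset.mul_sum, ← Finset.mul_sum, ← hAdef]
    rw [hsplit, ← hentβ] at hsum
    linarith [hgibbs]


lemma ent_of_zero {α : 𝓨 → ℝ} (h : ∀ y, α y = 0) : ent α = 0 := by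
  unfold ent
  have h1 : (∑ y, Real.negMulLog (α y)) = 0 :=
    Finset.sum_eq_zero (fun y _ => by rw [h y, Real.negMulLog_zero])
  have h2 : (∑ y, α y) = 0 := Finset.sum_eq_zero (fun y _ => h y)
  rw [h1, h2, Real.negMulLog_zero, sub_zero]

lemma condShannonEntropy_eq {𝓧 : Type*} [Fintype 𝓧] (p : 𝓧 → 𝓨 → ℝ)
    (hp : ∀ x y, 0 ≤ p x y) :
    condShannonEntropy p = (∑ x, ent (p x)) / Real.log 2 := by
  classical
  have hlog2 : (0:ℝ) < Real.log 2 := Real.log_pos (by norm_num)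
  unfold condShannonEntropy
  have hx : ∀ x ∈ Finset.univ,
      (if 0 < ∑ y, p x y then
        (∑ y, p x y) *
          ∑ y, (p x y / ∑ y', p x y') * Real.logb 2 (p x y / ∑ y', p x y')
      else 0) = -(ent (p x) / Real.log 2) := by
    intro x _
    by_cases h : 0 < ∑ y, p x y
    · rw [if_pos h]
      have hterm : ∀ y ∈ Finset.univ, (p x y / ∑ y', p x y') *
          Real.logb 2 (p x y / ∑ y', p x y')
          = p x y * Real.log (p x y / ∑ y', p x y') / ((∑ y', p x y') * Real.log 2) := by
        intro y _
        rw [Real.logb]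
        ring
      rw [Finset.sum_congr rfl hterm]
      have hsum2 : ∀ y ∈ Finset.univ, p x y * Real.log (p x y / ∑ y', p x y')
          = -(p x y * Real.log ((∑ y', p x y') / p x y)) := by
        intro y _
        rcases (hp x y).eq_or_lt with h0 | h0
        · rw [← h0]; ring
        · rw [show (∑ y', p x y') / p x y = (p x y / ∑ y', p x y')⁻¹ by
            rw [inv_div], Real.log_inv]
          ring
      have e1 : ∑ y, p x y * Real.log (p x y / ∑ y', p x y') / ((∑ y', p x y') * Real.log 2)
          = (∑ y, p x y * Real.log (p x y / ∑ y', p x y')) / ((∑ y', p x y') * Real.log 2) := by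
        rw [Finset.sum_div]
      rw [e1, Finset.sum_congr rfl hsum2]
      have e2 : ∑ y, -(p x y * Real.log ((∑ y', p x y') / p x y))
          = -(ent (p x)) := by
        rw [Finset.sum_neg_distrib, ent_eq_sum (hp x)]
      rw [e2]
      field_simp
    · rw [if_neg h]
      have hA0 : ∑ y, p x y = 0 :=
        le_antisymm (not_lt.mp h) (Finset.sum_nonneg (fun y _ => hp x y))
      have hz : ∀ y, p x y = 0 := by
        intro y
        have h1 : p x y ≤ ∑ y', p x y' :=
          Finset.single_le_sum (fun i _ => hp x i) (Finset.mem_univ y)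
        have := hp x y
        linarith [hA0 ▸ h1]
      rw [ent_of_zero hz]
      simp
  rw [Finset.sum_congr rfl hx, Finset.sum_neg_distrib, neg_neg, Finset.sum_div]

lemma binEntropy_eq (ε : ℝ) :
    _root_.binEntropy ε = (-ε * Real.log ε - (1 - ε) * Real.log (1 - ε)) / Real.log 2 := by
  unfold _root_.binEntropy
  rw [Real.logb, Real.logb]
  ring

end ASproof

open ASproof in
/-- Alhejji–Smith optimal uniform continuity bound for classical conditional
Shannon entropy. -/
theorem classical_conditional_entropy_uniform_continuity
    {𝓧 𝓨 : Type*} [Fintype 𝓧] [Fintype 𝓨] (hY : 2 ≤ Fintype.card 𝓨)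
    (p q : 𝓧 → 𝓨 → ℝ)
    (hp : ∀ x y, 0 ≤ p x y) (hp1 : ∑ x, ∑ y, p x y = 1)
    (hq : ∀ x y, 0 ≤ q x y) (hq1 : ∑ x, ∑ y, q x y = 1)
    (ε : ℝ) (hε0 : 0 < ε) (hε1 : ε ≤ 1 - 1 / (Fintype.card 𝓨 : ℝ))
    (htv : (1 / 2) * ∑ x, ∑ y, |p x y - q x y| ≤ ε) :
    |condShannonEntropy p - condShannonEntropy q| ≤
      ε * Real.logb 2 ((Fintype.card 𝓨 : ℝ) - 1) + binEntropy ε := by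
  classical
  have hlog2 : (0:ℝ) < Real.log 2 := Real.log_pos (by norm_num)
  have hKnat : 0 < Fintype.card 𝓨 := by omega
  have hK2 : (2:ℝ) ≤ (Fintype.card 𝓨 : ℝ) := by exact_mod_cast hY
  set K : ℝ := (Fintype.card 𝓨 : ℝ) with hK
  have hK1 : (0:ℝ) < K - 1 := by linarith
  have hK0 : (0:ℝ) < K := by linarith
  have h1ε : 0 < 1 - ε := by
    have h1K : 0 < 1 / K := by positivity
    linarith
  have hε1' : ε < 1 := by linarith
  set c : ℝ := Real.log ((K - 1) * (1 - ε) / ε) with hc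
  set R : ℝ := Real.log ((K - 1) / ε) with hR
  have hc0 : 0 ≤ c := by
    rw [hc]
    apply Real.log_nonneg
    rw [le_div_iff₀ hε0]
    have h' : ε * K ≤ K - 1 := by
      have := mul_le_mul_of_nonneg_right hε1 hK0.le
      calc ε * K ≤ (1 - 1 / K) * K := by nlinarith
        _ = K - 1 := by field_simp
    nlinarith
  -- the identity  R - c * (1-ε) = ε log(K-1) + h(ε)
  have hident : R - c * (1 - ε)
      = ε * Real.log (K - 1) + (-ε * Real.log ε - (1 - ε) * Real.log (1 - ε)) := by
    have hlogA : Real.log ((K - 1) / ε) = Real.log (K - 1) - Real.log ε :=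
      Real.log_div (ne_of_gt hK1) (ne_of_gt hε0)
    have hlogB : Real.log ((K - 1) * (1 - ε) / ε)
        = Real.log (K - 1) + Real.log (1 - ε) - Real.log ε := by
      rw [Real.log_div (by positivity) (ne_of_gt hε0),
        Real.log_mul (ne_of_gt hK1) (ne_of_gt h1ε)]
    rw [hR, hc, hlogA, hlogB]
    ring
  -- total overlap mass is at least 1 - ε
  have hmin : ∀ x y, min (p x y) (q x y) = (p x y + q x y - |p x y - q x y|) / 2 := by
    intro x y
    rcases le_total (p x y) (q x y) with h | h
    · rw [min_eq_left h, abs_of_nonpos (by linarith)]; ring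
    · rw [min_eq_right h, abs_of_nonneg (by linarith)]; ring
  have hMtot : 1 - ε ≤ ∑ x, ∑ y, min (p x y) (q x y) := by
    have e1 : ∀ x, (∑ y, min (p x y) (q x y))
        = ((∑ y, p x y) + (∑ y, q x y) - ∑ y, |p x y - q x y|) / 2 := by
      intro x
      rw [Finset.sum_congr rfl (fun y _ => hmin x y), ← Finset.sum_div,
        Finset.sum_sub_distrib, Finset.sum_add_distrib]
    rw [Finset.sum_congr rfl (fun x _ => e1 x), ← Finset.sum_div,
      Finset.sum_sub_distrib, Finset.sum_add_distrib, hp1, hq1]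
    linarith
  -- one-sided bound in nats
  have main : ∀ u v : 𝓧 → 𝓨 → ℝ, (∀ x y, 0 ≤ u x y) → (∀ x y, 0 ≤ v x y) →
      (∑ x, ∑ y, u x y = 1) → (1 - ε ≤ ∑ x, ∑ y, min (u x y) (v x y)) →
      (∑ x, ent (u x)) - (∑ x, ent (v x))
        ≤ ε * Real.log (K - 1) + (-ε * Real.log ε - (1 - ε) * Real.log (1 - ε)) := by
    intro u v hu hv hu1 hM
    have hfib : ∀ x ∈ Finset.univ, ent (u x) - ent (v x)
        ≤ R * (∑ y, u x y) - c * (∑ y, min (u x y) (v x y)) := by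
      intro x _
      exact fiber_bound hY hε0 hε1 (hu x) (hv x)
    have hsum := Finset.sum_le_sum hfib
    rw [Finset.sum_sub_distrib] at hsum
    have e2 : ∑ x, (R * (∑ y, u x y) - c * (∑ y, min (u x y) (v x y)))
        = R * (∑ x, ∑ y, u x y) - c * (∑ x, ∑ y, min (u x y) (v x y)) := by
      rw [Finset.sum_sub_distrib, ← Finset.mul_sum, ← Finset.mul_sum]
    rw [e2, hu1, mul_one] at hsum
    have : R - c * (∑ x, ∑ y, min (u x y) (v x y)) ≤ R - c * (1 - ε) := by
      have := mul_le_mul_of_nonneg_left hM hc0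
      linarith
    rw [hident] at this
    linarith
  have hdir1 := main p q hp hq hp1 hMtot
  have hdir2 : (∑ x, ent (q x)) - (∑ x, ent (p x))
      ≤ ε * Real.log (K - 1) + (-ε * Real.log ε - (1 - ε) * Real.log (1 - ε)) := by
    apply main q p hq hp hq1
    have e3 : ∀ x, (∑ y, min (q x y) (p x y)) = ∑ y, min (p x y) (q x y) := by
      intro x
      exact Finset.sum_congr rfl (fun y _ => min_comm _ _)
    rw [Finset.sum_congr rfl (fun x _ => e3 x)]
    exact hMtot
  -- convert to bits
  rw [condShannonEntropy_eq p hp, condShannonEntropy_eq q hq, binEntropy_eq,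
    Real.logb, div_sub_div_same, abs_div, abs_of_pos hlog2]
  have hfin : |∑ x, ent (p x) - ∑ x, ent (q x)|
      ≤ ε * Real.log (K - 1) + (-ε * Real.log ε - (1 - ε) * Real.log (1 - ε)) :=
    abs_sub_le_iff.mpr ⟨hdir1, hdir2⟩
  calc |∑ x, ent (p x) - ∑ x, ent (q x)| / Real.log 2
      ≤ (ε * Real.log (K - 1) + (-ε * Real.log ε - (1 - ε) * Real.log (1 - ε)))
          / Real.log 2 := by gcongr
    _ = ε * (Real.log (K - 1) / Real.log 2)
        + (-ε * Real.log ε - (1 - ε) * Real.log (1 - ε)) / Real.log 2 := by ring
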